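/- The limit as k → ∞ of the sum over j from 0 to 2k-1 of (-1)^j · sin²((2j+1)π/(8k+2)) equals -1/2. -/

import Mathlib

open Real Finset Filter

lemma tele_sum (x : ℝ) (n : ℕ) :
    2 * Real.cos x * ∑ j ∈ Finset.range n, (-1 : ℝ) ^ j * Real.cos ((2 * j + 1) * x)
      = 1 + (-1) ^ (n + 1) * Real.cos (2 * n * x) := by
  induction n with
  | zero => simp
  | succ n ih =>
    rw [Finset.sum_range_succ, mul_add, ih]
    have h : Real.cos (2 * ((n : ℝ) + 1) * x) + Real.cos (2 * n * x)
        = 2 * Real.cos ((2 * n + 1) * x) * Real.cos x := by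
      rw [Real.cos_add_cos]
      ring_nf
    push_cast
    linear_combination (-((-1 : ℝ) ^ n)) * h

lemma closed_form (k : ℕ) :
    ∑ j ∈ Finset.range (2 * k),
        (-1 : ℝ) ^ j * Real.sin ((2 * j + 1) * π / (8 * k + 2)) ^ 2
      = -(1 + Real.cos (π / (4 * k + 1))) / (4 * Real.cos (π / (4 * k + 1))) := by
  set α : ℝ := π / (4 * k + 1) with hαdef
  have hk1 : (0 : ℝ) < 4 * k + 1 := by positivity
  have hc : Real.cos α ≠ 0 := by
    rcases Nat.eq_zero_or_pos k with hk | hk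
    · subst hk
      norm_num [hαdef, Real.cos_pi]
    · apply ne_of_gt
      apply Real.cos_pos_of_mem_Ioo
      constructor
      · have : 0 < α := by rw [hαdef]; positivity
        linarith [Real.pi_pos]
      · rw [hαdef]
        apply div_lt_div_of_pos_left Real.pi_pos (by norm_num)
        have : (1 : ℝ) ≤ k := by exact_mod_cast hk
        linarith
  have h0 : ∑ j ∈ Finset.range (2 * k), (-1 : ℝ) ^ j = 0 := by
    rw [neg_one_geom_sum]
    simp [even_two_mul]
  have hterm : ∀ j ∈ Finset.range (2 * k),
      (-1 : ℝ) ^ j * Real.sin ((2 * j + 1) * π / (8 * k + 2)) ^ 2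
        = (-1 : ℝ) ^ j / 2 - (-1 : ℝ) ^ j * Real.cos ((2 * j + 1) * α) / 2 := by
    intro j _
    have h2 : 2 * ((2 * (j : ℝ) + 1) * π / (8 * k + 2)) = (2 * j + 1) * α := by
      rw [hαdef]
      field_simp
      ring
    rw [Real.sin_sq_eq_half_sub, h2]
    ring
  have htele := tele_sum α (2 * k)
  have h4k : 2 * ((2 * k : ℕ) : ℝ) * α = π - α := by
    rw [hαdef]
    field_simp
    push_cast
    ring
  rw [h4k, Real.cos_pi_sub] at htele
  have hpow : ((-1 : ℝ)) ^ (2 * k + 1) = -1 := by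
    rw [pow_succ, pow_mul]
    norm_num
  rw [hpow] at htele
  rw [Finset.sum_congr rfl hterm, Finset.sum_sub_distrib, ← Finset.sum_div, h0]
  rw [← Finset.sum_div]
  field_simp
  linear_combination -2 * htele

theorem stmt_5 :
    Filter.Tendsto
      (fun k : ℕ => ∑ j ∈ Finset.range (2 * k),
        (-1 : ℝ) ^ j * Real.sin ((2 * j + 1) * π / (8 * k + 2)) ^ 2)
      Filter.atTop (nhds (-1 / 2)) := by
  have hα : Filter.Tendsto (fun k : ℕ => π / (4 * k + 1)) Filter.atTop (nhds 0) := by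
    have h1 : Filter.Tendsto (fun k : ℕ => (4 * (k : ℝ) + 1)) Filter.atTop Filter.atTop := by
      apply Filter.tendsto_atTop_add_const_right
      exact (tendsto_natCast_atTop_atTop).const_mul_atTop (by norm_num)
    exact Filter.Tendsto.div_atTop tendsto_const_nhds h1
  have hcos : Filter.Tendsto (fun k : ℕ => Real.cos (π / (4 * k + 1)))
      Filter.atTop (nhds 1) := by
    have := (Real.continuous_cos.tendsto 0).comp hα
    simpa [Function.comp_def] using this
  have hmain : Filter.Tendsto
      (fun k : ℕ => -(1 + Real.cos (π / (4 * k + 1))) / (4 * Real.cos (π / (4 * k + 1))))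
      Filter.atTop (nhds (-1 / 2)) := by
    have h := (((tendsto_const_nhds (x := (1:ℝ))).add hcos).neg).div
      ((tendsto_const_nhds (x := (4:ℝ))).mul hcos) (by norm_num)
    convert h using 2 with k <;> norm_num
  exact hmain.congr fun k => (closed_form k).symm
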